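/- Let n ≥ 3 and (n−1)/2 < p < n/2. There is a constant C > 0, depending only on n and p, such that for every f ∈ L^p(S^{n−1}) (with respect to the surface measure on the unit sphere S^{n−1} ⊂ ℝ^n), the function V(x) = f(x/|x|) |x|^{−2} on ℝ^n \ {0} satisfies ‖V‖_{F^p} ≤ C ‖f‖_{L^p(S^{n−1})}; in particular V ∈ F^p. -/

import Mathlib

noncomputable section

open MeasureTheory Metric Complex
open scoped ENNReal FourierTransform SchwartzMap Classical

/-- The Fourier multiplier operator `m(√−Δ)` on `ℝⁿ`:
`m(√−Δ)h = 𝓕⁻¹(m(|ξ|) 𝓕h(ξ))`. -/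
def mOp (n : ℕ) (m : ℝ → ℂ) (h : EuclideanSpace ℝ (Fin n) → ℂ) :
    EuclideanSpace ℝ (Fin n) → ℂ :=
  fun x => 𝓕⁻ (fun ξ : EuclideanSpace ℝ (Fin n) => m ‖ξ‖ * 𝓕 h ξ) x

/-- The multiplier of `e^{it√−Δ}`, i.e. `ρ ↦ e^{itρ}`. -/
def expMult (t : ℝ) : ℝ → ℂ := fun ρ => Complex.exp (Complex.I * t * ρ)

/-- The multiplier of `cos(t√−Δ)`, i.e. `ρ ↦ cos (tρ)`. -/
def cosMult (t : ℝ) : ℝ → ℂ := fun ρ => ((Real.cos (t * ρ) : ℝ) : ℂ)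

/-- The multiplier of `sin(t√−Δ)/√−Δ`, i.e. `ρ ↦ sin (tρ)/ρ`. -/
def sincMult (t : ℝ) : ℝ → ℂ := fun ρ => ((Real.sin (t * ρ) / ρ : ℝ) : ℂ)

/-- The multiplier of `sin(t√−Δ)`, i.e. `ρ ↦ sin (tρ)`. -/
def sinMult (t : ℝ) : ℝ → ℂ := fun ρ => ((Real.sin (t * ρ) : ℝ) : ℂ)

/-- The multiplier of `(√−Δ)^γ`, i.e. `ρ ↦ ρ^γ`. -/
def powMult (γ : ℝ) : ℝ → ℂ := fun ρ => ((ρ ^ γ : ℝ) : ℂ)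

/-- A function is Schwartz if it agrees pointwise with some Schwartz map. -/
def IsSchwartz {n : ℕ} (h : EuclideanSpace ℝ (Fin n) → ℂ) : Prop :=
  ∃ φ : 𝓢(EuclideanSpace ℝ (Fin n), ℂ), ∀ x, h x = φ x

/-- The Fefferman–Phong norm
`‖V‖_{𝓕^p} = sup_{x, r>0} r^(2-n/p) (∫_{B_r(x)} |V|^p)^(1/p)`. -/
def fpNorm (n : ℕ) (p : ℝ) (V : EuclideanSpace ℝ (Fin n) → ℂ) : ℝ≥0∞ :=
  ⨆ (x : EuclideanSpace ℝ (Fin n)) (r : ℝ) (_ : 0 < r),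
    ENNReal.ofReal (r ^ (2 - n / p)) *
      (∫⁻ y in ball x r, ENNReal.ofReal (‖V y‖ ^ p)) ^ (1 / p)

/-- The weak `L^{n/2}` quasinorm `sup_{λ>0} λ · |{|V| > λ}|^{2/n}`. -/
def wkNorm (n : ℕ) (V : EuclideanSpace ℝ (Fin n) → ℂ) : ℝ≥0∞ :=
  ⨆ (l : ℝ) (_ : 0 < l),
    ENNReal.ofReal l * (volume {x : EuclideanSpace ℝ (Fin n) | l < ‖V x‖}) ^ ((2 : ℝ) / n)

/-- The mixed norm `‖F‖_{L^q_t L^r_x}` for `F : ℝⁿ × ℝ → ℂ`, curried as `F x t`. -/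
def mixedNorm (n : ℕ) (q r : ℝ) (F : EuclideanSpace ℝ (Fin n) → ℝ → ℂ) : ℝ≥0∞ :=
  (∫⁻ t : ℝ, (∫⁻ x : EuclideanSpace ℝ (Fin n), (‖F x t‖₊ : ℝ≥0∞) ^ r) ^ (q / r)) ^ (1 / q)

/-- The weighted norm `‖h‖_{L²_{x,t}(w)}` with weight `w : ℝⁿ → [0,∞]`. -/
def wtNorm (n : ℕ) (w : EuclideanSpace ℝ (Fin n) → ℝ≥0∞)
    (h : EuclideanSpace ℝ (Fin n) → ℝ → ℂ) : ℝ≥0∞ :=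
  (∫⁻ t : ℝ, ∫⁻ x : EuclideanSpace ℝ (Fin n), (‖h x t‖₊ : ℝ≥0∞) ^ (2 : ℝ) * w x) ^ ((1 : ℝ) / 2)

/-- The homogeneous Sobolev norm `‖h‖_{Ḣ^γ} = ‖(√−Δ)^γ h‖_{L²}`. -/
def sobNorm (n : ℕ) (γ : ℝ) (h : EuclideanSpace ℝ (Fin n) → ℂ) : ℝ≥0∞ :=
  eLpNorm (mOp n (powMult γ) h) 2 volume

/-- The point `x/|x|` of the unit sphere, for `x ≠ 0`. -/
def sphMap (n : ℕ) (x : EuclideanSpace ℝ (Fin n)) (hx : x ≠ 0) :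
    Metric.sphere (0 : EuclideanSpace ℝ (Fin n)) 1 :=
  ⟨‖x‖⁻¹ • x, by
    rw [mem_sphere_zero_iff_norm, norm_smul, norm_inv, norm_norm,
      inv_mul_cancel₀ (norm_ne_zero_iff.mpr hx)]⟩

/-- For `(n-1)/2 < p < n/2`, the potential `V(x) = f(x/|x|)|x|^{-2}` with
`f ∈ L^p(S^{n-1})` belongs to the Fefferman–Phong class `𝓕^p`, with norm bound. -/
theorem angular_inverse_square_fp (n : ℕ) (hn : 3 ≤ n) (p : ℝ)
    (hp1 : ((n : ℝ) - 1) / 2 < p) (hp2 : p < (n : ℝ) / 2) :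
    ∃ C > (0 : ℝ), ∀ f : Metric.sphere (0 : EuclideanSpace ℝ (Fin n)) 1 → ℂ,
      Measurable f →
      fpNorm n p (fun x => if hx : x = 0 then 0 else
          f (sphMap n x hx) * ((‖x‖ ^ (-2 : ℝ) : ℝ) : ℂ)) ≤
        ENNReal.ofReal C *
          (∫⁻ ω, ENNReal.ofReal (‖f ω‖ ^ p)
            ∂((volume : Measure (EuclideanSpace ℝ (Fin n))).toSphere)) ^ (1 / p) := by
  have hn3 : (3 : ℝ) ≤ (n : ℝ) := by exact_mod_cast hn
  have hp0 : (0 : ℝ) < p := lt_trans (by linarith) hp1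
  set β : ℝ := (n : ℝ) - 2 * p with hβdef
  have hβ0 : 0 < β := by simp only [hβdef]; linarith
  have hβ1 : β ≤ 1 := by simp only [hβdef]; linarith
  set α : ℝ := (n : ℝ) - 1 - 2 * p with hαdef
  have hα : -1 < α := by simp only [hαdef]; linarith
  have hαβ : α + 1 = β := by simp only [hαdef, hβdef]; ring
  have hK : (0 : ℝ) < 2 ^ β / β := div_pos (Real.rpow_pos_of_pos two_pos β) hβ0
  refine ⟨(2 ^ β / β) ^ (1 / p), Real.rpow_pos_of_pos hK _, ?_⟩
  intro f hf
  haveI : Nontrivial (EuclideanSpace ℝ (Fin n)) :=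
    ⟨⟨0, EuclideanSpace.single ⟨0, by omega⟩ 1, fun h => by
      have := congrArg (fun v => v ⟨0, by omega⟩) h
      simp at this⟩⟩
  set I : ℝ≥0∞ := ∫⁻ ω, ENNReal.ofReal (‖f ω‖ ^ p)
      ∂((volume : Measure (EuclideanSpace ℝ (Fin n))).toSphere) with hI
  rw [fpNorm]
  refine iSup_le fun x => iSup_le fun r => iSup_le fun hr => ?_
  set A : ℝ := max (‖x‖ - r) 0 with hA
  set B : ℝ := ‖x‖ + r with hB
  have hA0 : 0 ≤ A := le_max_right _ _
  have hAB : A ≤ B := max_le (by linarith [norm_nonneg x])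
    (by positivity)
  have hB0 : 0 < B := by positivity
  set ind : ℝ → ℝ≥0∞ := (Set.Ioc A B).indicator fun s => ENNReal.ofReal (s ^ (-2 * p))
    with hind
  have mind : Measurable ind := Measurable.indicator (by fun_prop) measurableSet_Ioc
  set H : EuclideanSpace ℝ (Fin n) → ℝ≥0∞ := fun y =>
    ind ‖y‖ * ENNReal.ofReal (‖(if hy : y = 0 then (0 : ℂ) else f (sphMap n y hy))‖ ^ p)
    with hH
  -- Step 1: pointwise bound on the ball
  have key1 : (∫⁻ y in ball x r, ENNReal.ofReal
      (‖(fun z => if hz : z = 0 then (0 : ℂ) else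
          f (sphMap n z hz) * ((‖z‖ ^ (-2 : ℝ) : ℝ) : ℂ)) y‖ ^ p)) ≤ ∫⁻ y, H y := by
    rw [← lintegral_indicator measurableSet_ball]
    refine lintegral_mono fun y => ?_
    by_cases hy : y ∈ ball x r
    · rw [Set.indicator_of_mem hy]
      by_cases hy0 : y = 0
      · subst hy0
        simp [Real.zero_rpow hp0.ne']
      · have hyn : (0 : ℝ) < ‖y‖ := norm_pos_iff.mpr hy0
        have hmem : ‖y‖ ∈ Set.Ioc A B := by
          have hd : dist y x < r := mem_ball.mp hy
          have h1 : |‖y‖ - ‖x‖| ≤ ‖y - x‖ := abs_norm_sub_norm_le y x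
          rw [← dist_eq_norm] at h1
          have h2 : |‖y‖ - ‖x‖| < r := lt_of_le_of_lt h1 hd
          rw [abs_lt] at h2
          exact ⟨max_lt (by linarith [h2.1]) hyn, by simp only [hB]; linarith [h2.2]⟩
        have hnorm : ‖f (sphMap n y hy0) * ((‖y‖ ^ (-2 : ℝ) : ℝ) : ℂ)‖ ^ p
            = ‖y‖ ^ (-2 * p) * ‖f (sphMap n y hy0)‖ ^ p := by
          rw [norm_mul, Complex.norm_real, Real.norm_eq_abs,
            _root_.abs_of_nonneg (Real.rpow_nonneg (norm_nonneg y) _),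
            Real.mul_rpow (norm_nonneg _) (Real.rpow_nonneg (norm_nonneg y) _),
            ← Real.rpow_mul (norm_nonneg y), mul_comm]
        simp only [dif_neg hy0, hH, hind]
        rw [Set.indicator_of_mem hmem, hnorm,
          ENNReal.ofReal_mul (Real.rpow_nonneg (norm_nonneg y) _)]
    · rw [Set.indicator_of_notMem hy]
      exact zero_le
  -- Step 2: pass to polar coordinates
  have hdim : Module.finrank ℝ (EuclideanSpace ℝ (Fin n)) = n := finrank_euclideanSpace_fin
  set R : ℝ≥0∞ := ∫⁻ ρ : Set.Ioi (0 : ℝ), ind ↑ρ ∂(Measure.volumeIoiPow (n - 1)) with hR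
  have mf2 : Measurable fun ω : Metric.sphere (0 : EuclideanSpace ℝ (Fin n)) 1 =>
      ENNReal.ofReal (‖f ω‖ ^ p) := by
    have h1 : Measurable fun ω : Metric.sphere (0 : EuclideanSpace ℝ (Fin n)) 1 => ‖f ω‖ :=
      hf.norm
    fun_prop
  have key2 : (∫⁻ y, H y) = I * R := by
    have hF : Measurable fun z : Metric.sphere (0 : EuclideanSpace ℝ (Fin n)) 1 ×
        Set.Ioi (0 : ℝ) => ENNReal.ofReal (‖f z.1‖ ^ p) * ind ↑z.2 := by
      exact (mf2.comp measurable_fst).mul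
        (mind.comp (measurable_subtype_coe.comp measurable_snd))
    have e2 : (∫⁻ y, H y) = ∫⁻ y : ({0}ᶜ : Set (EuclideanSpace ℝ (Fin n))), H ↑y
        ∂((volume : Measure (EuclideanSpace ℝ (Fin n))).comap (↑)) := by
      rw [lintegral_subtype_comap (measurableSet_singleton 0).compl,
        MeasureTheory.restrict_compl_singleton]
    have e3 : (∫⁻ y : ({0}ᶜ : Set (EuclideanSpace ℝ (Fin n))), H ↑y
        ∂((volume : Measure (EuclideanSpace ℝ (Fin n))).comap (↑)))
        = ∫⁻ z, ENNReal.ofReal (‖f z.1‖ ^ p) * ind ↑z.2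
          ∂(((volume : Measure (EuclideanSpace ℝ (Fin n))).toSphere).prod
            (Measure.volumeIoiPow (n - 1))) := by
      have hdim' : Module.finrank ℝ (EuclideanSpace ℝ (Fin n)) - 1 = n - 1 := by rw [hdim]
      rw [← hdim']
      rw [← (Measure.measurePreserving_homeomorphUnitSphereProd
        (volume : Measure (EuclideanSpace ℝ (Fin n)))).lintegral_comp hF]
      refine lintegral_congr fun y => ?_
      have hy0 : (y : EuclideanSpace ℝ (Fin n)) ≠ 0 := y.2
      have hfst : (homeomorphUnitSphereProd (EuclideanSpace ℝ (Fin n)) y).1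
          = sphMap n ↑y hy0 := Subtype.ext (by simp [homeomorphUnitSphereProd, sphMap])
      simp only [hH, dif_neg hy0, hfst, homeomorphUnitSphereProd_apply_snd_coe]
      exact mul_comm _ _
    rw [e2, e3, lintegral_prod_mul (f := fun ω => ENNReal.ofReal (‖f ω‖ ^ p))
      (g := fun ρ : Set.Ioi (0 : ℝ) => ind ↑ρ) mf2.aemeasurable
      (Measurable.aemeasurable (mind.comp measurable_subtype_coe))]
  -- Step 3: compute the radial integral
  have key3 : R = ENNReal.ofReal ((B ^ β - A ^ β) / β) := by
    have hcast : ((n - 1 : ℕ) : ℝ) = (n : ℝ) - 1 := by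
      rw [Nat.cast_sub (by omega)]; norm_num
    rw [hR, Measure.volumeIoiPow,
      lintegral_withDensity_eq_lintegral_mul (Measure.comap Subtype.val volume)
        (f := fun ρ : Set.Ioi (0 : ℝ) => ENNReal.ofReal ((ρ : ℝ) ^ (n - 1)))
        ((measurable_subtype_coe.pow_const _).ennreal_ofReal)
        (g := fun ρ : Set.Ioi (0 : ℝ) => ind ↑ρ)
        (mind.comp measurable_subtype_coe)]
    simp only [Pi.mul_apply]
    have e4 : (∫⁻ ρ : Set.Ioi (0 : ℝ),
        ENNReal.ofReal ((ρ : ℝ) ^ (n - 1)) * ind ↑ρ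
        ∂(Measure.comap Subtype.val volume))
        = ∫⁻ s in Set.Ioi (0 : ℝ), ENNReal.ofReal (s ^ (n - 1)) * ind s :=
      lintegral_subtype_comap measurableSet_Ioi
        (fun s : ℝ => ENNReal.ofReal (s ^ (n - 1)) * ind s)
    rw [e4]
    have e5 : ∀ s : ℝ, ENNReal.ofReal (s ^ (n - 1)) * ind s
        = (Set.Ioc A B).indicator
          (fun s => ENNReal.ofReal (s ^ (n - 1)) * ENNReal.ofReal (s ^ (-2 * p))) s := by
      intro s
      by_cases hs : s ∈ Set.Ioc A B
      · rw [hind, Set.indicator_of_mem hs, Set.indicator_of_mem hs]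
      · rw [hind, Set.indicator_of_notMem hs, Set.indicator_of_notMem hs, mul_zero]
    have hsub : Set.Ioc A B ⊆ Set.Ioi (0 : ℝ) := fun s hs => lt_of_le_of_lt hA0 hs.1
    have hinter : Set.Ioc A B ∩ Set.Ioi (0 : ℝ) = Set.Ioc A B := Set.inter_eq_left.mpr hsub
    rw [lintegral_congr fun s => e5 s, lintegral_indicator measurableSet_Ioc,
      Measure.restrict_restrict measurableSet_Ioc, hinter]
    have e6 : ∀ s ∈ Set.Ioc A B, ENNReal.ofReal (s ^ (n - 1)) * ENNReal.ofReal (s ^ (-2 * p))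
        = ENNReal.ofReal (s ^ α) := by
      intro s hs
      have hs0 : 0 < s := lt_of_le_of_lt hA0 hs.1
      rw [← ENNReal.ofReal_mul (by positivity), ← Real.rpow_natCast s (n - 1),
        ← Real.rpow_add hs0]
      congr 1
      rw [hcast]
      simp only [hαdef]; ring
    rw [setLIntegral_congr_fun measurableSet_Ioc e6]
    have hint : IntegrableOn (fun s : ℝ => s ^ α) (Set.Ioc A B) volume :=
      (intervalIntegral.intervalIntegrable_rpow' hα).1
    rw [← ofReal_integral_eq_lintegral_ofReal hint]
    · congr 1
      rw [← intervalIntegral.integral_of_le hAB, integral_rpow (Or.inl hα), hαβ]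
    · filter_upwards [ae_restrict_mem measurableSet_Ioc] with s hs
      exact Real.rpow_nonneg (lt_of_le_of_lt hA0 hs.1).le _
  -- Step 4: bound the radial factor
  have key4 : R ≤ ENNReal.ofReal (2 ^ β * r ^ β / β) := by
    rw [key3]
    apply ENNReal.ofReal_le_ofReal
    rw [div_le_div_iff_of_pos_right hβ0]
    have h1 : B ≤ A + 2 * r := by
      have : ‖x‖ - r ≤ A := le_max_left _ _
      simp only [hB]; linarith
    have h2 : B ^ β ≤ (A + 2 * r) ^ β := Real.rpow_le_rpow hB0.le h1 hβ0.le
    have h3 : (A + 2 * r) ^ β ≤ A ^ β + (2 * r) ^ β := by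
      have h0 : (0 : ℝ) ≤ 2 * r := by positivity
      have := NNReal.rpow_add_le_add_rpow (⟨A, hA0⟩ : NNReal)
        (⟨2 * r, h0⟩ : NNReal) hβ0.le hβ1
      have h4 := NNReal.coe_le_coe.2 this
      push_cast [NNReal.coe_rpow, NNReal.coe_mk] at h4
      exact h4
    have h5 : (2 * r) ^ β = 2 ^ β * r ^ β := Real.mul_rpow (by norm_num) hr.le
    linarith
  -- Step 5: combine
  have key : (∫⁻ y in ball x r, ENNReal.ofReal
      (‖(fun z => if hz : z = 0 then (0 : ℂ) else
          f (sphMap n z hz) * ((‖z‖ ^ (-2 : ℝ) : ℝ) : ℂ)) y‖ ^ p))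
      ≤ I * ENNReal.ofReal (2 ^ β * r ^ β / β) := by
    refine le_trans key1 ?_
    rw [key2]
    exact mul_le_mul_right key4 I
  have h1p : (0 : ℝ) ≤ 1 / p := by positivity
  calc ENNReal.ofReal (r ^ (2 - ↑n / p)) *
      (∫⁻ y in ball x r, ENNReal.ofReal
        (‖(fun z => if hz : z = 0 then (0 : ℂ) else
            f (sphMap n z hz) * ((‖z‖ ^ (-2 : ℝ) : ℝ) : ℂ)) y‖ ^ p)) ^ (1 / p)
      ≤ ENNReal.ofReal (r ^ (2 - ↑n / p)) *
        (I * ENNReal.ofReal (2 ^ β * r ^ β / β)) ^ (1 / p) :=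
        mul_le_mul_right (ENNReal.rpow_le_rpow key h1p) _
    _ = ENNReal.ofReal (r ^ (2 - ↑n / p)) *
        (I ^ (1 / p) * ENNReal.ofReal ((2 ^ β * r ^ β / β) ^ (1 / p))) := by
        rw [ENNReal.mul_rpow_of_nonneg _ _ h1p,
          ENNReal.ofReal_rpow_of_pos (by positivity)]
    _ = ENNReal.ofReal (r ^ (2 - ↑n / p) * (2 ^ β * r ^ β / β) ^ (1 / p)) * I ^ (1 / p) := by
        rw [ENNReal.ofReal_mul (Real.rpow_nonneg hr.le _)]
        ring_nf
    _ = ENNReal.ofReal ((2 ^ β / β) ^ (1 / p)) * I ^ (1 / p) := by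
        congr 2
        have hrw : 2 ^ β * r ^ β / β = 2 ^ β / β * r ^ β := by ring
        rw [hrw, Real.mul_rpow hK.le (Real.rpow_nonneg hr.le _),
          ← Real.rpow_mul hr.le, mul_comm ((2 ^ β / β) ^ (1 / p)), ← mul_assoc,
          ← Real.rpow_add hr]
        have hz : 2 - ↑n / p + β * (1 / p) = 0 := by
          simp only [hβdef]
          field_simp
          ring
        rw [hz, Real.rpow_zero, one_mul]

end
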